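/- The function r(s) = ∫₀^s (1+t²)^{−1/2} dt − ∫_s^∞ [(1+t²−mt^{2−n})^{−1/2} − (1+t²)^{−1/2}] dt satisfies the asymptotic expansion r(s) = arsinh(s) − (m/(2n)) s^{−n} + O(s^{−n−2}) as s → ∞. -/

import Mathlib

open MeasureTheory Filter


set_option maxHeartbeats 1000000 in
lemma aux_alg (m t u : ℝ) (hm : 0 < m) (ht1 : 1 ≤ t) (hu0 : 0 < u) (hmu : m * u ≤ 1) :
    |(1 / Real.sqrt (1 + t ^ 2 - m * u) - 1 / Real.sqrt (1 + t ^ 2))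
      - m / 2 * (u / t ^ 3)| ≤ 5 * m / 4 * (u / t ^ 5) := by
  have ht0 : (0:ℝ) < t := lt_of_lt_of_le one_pos ht1
  have hta : t ^ 2 ≤ 1 + t ^ 2 - m * u := by linarith
  have ha0 : (0:ℝ) < 1 + t ^ 2 - m * u := lt_of_lt_of_le (by positivity) hta
  have hab : 1 + t ^ 2 - m * u ≤ 1 + t ^ 2 := by nlinarith
  set A : ℝ := Real.sqrt (1 + t ^ 2 - m * u) with hA
  set B : ℝ := Real.sqrt (1 + t ^ 2) with hB
  have hA2 : A ^ 2 = 1 + t ^ 2 - m * u := Real.sq_sqrt ha0.le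
  have hB2 : B ^ 2 = 1 + t ^ 2 := Real.sq_sqrt (by positivity)
  have htA : t ≤ A := by
    exact Real.le_sqrt_of_sq_le hta
  have hAB : A ≤ B := Real.sqrt_le_sqrt hab
  have htB : t ≤ B := le_trans htA hAB
  have hA0 : 0 < A := lt_of_lt_of_le ht0 htA
  have hB0 : 0 < B := lt_of_lt_of_le ht0 htB
  have hBle : B ≤ t + 1 / (2 * t) := by
    rw [hB, show t + 1/(2*t) = Real.sqrt ((t + 1/(2*t))^2) from
      (Real.sqrt_sq (by positivity)).symm]
    apply Real.sqrt_le_sqrt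
    have h1 : (t + 1/(2*t))^2 = t^2 + 1 + 1/(4*t^2) := by field_simp; ring
    have h2 : (0:ℝ) < 1/(4*t^2) := by positivity
    linarith
  have hAle : A ≤ t + 1 / (2 * t) := le_trans hAB hBle
  clear_value A B
  set D : ℝ := A * B * (A + B) with hD
  have hD0 : 0 < D := by positivity
  have hDlow : 2 * t ^ 3 ≤ D := by nlinarith [mul_le_mul htA htB ht0.le hA0.le]
  have hDhigh : D ≤ 2 * t ^ 3 + 5 * t := by
    have hε : t * (1 / (2 * t)) = 1 / 2 := by field_simp
    have hε2 : 1 / (2 * t) ≤ 1 / 2 := by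
      rw [div_le_div_iff₀ (by positivity) (by norm_num)]; linarith
    nlinarith [mul_le_mul hAle hBle hB0.le (by positivity : (0:ℝ) ≤ t + 1/(2*t)),
      sq_nonneg (1 / (2*t)), mul_pos ht0 ht0]
  have hh : 1 / A - 1 / B = m * u / D := by
    rw [div_sub_div _ _ hA0.ne' hB0.ne', hD, div_eq_div_iff (by positivity) (by positivity)]
    nlinarith [hA2, hB2]
  clear hD
  clear_value D
  rw [hh, abs_le]
  constructor
  · have key : m / 2 * (u / t ^ 3) - m * u / D ≤ 5 * m / 4 * (u / t ^ 5) := by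
      have h1 : m / 2 * (u / t ^ 3) - m * u / D = m * u * (D - 2 * t ^ 3) / (2 * t ^ 3 * D) := by
        field_simp
      rw [h1]
      have h2 : m * u * (D - 2 * t ^ 3) / (2 * t ^ 3 * D) ≤
          m * u * (5 * t) / (2 * t ^ 3 * (2 * t ^ 3)) := by
        apply div_le_div₀ (by positivity) ?_ (by positivity) ?_
        · nlinarith
        · nlinarith [mul_le_mul_of_nonneg_left hDlow (by positivity : (0:ℝ) ≤ 2 * t ^ 3)]
      refine h2.trans (le_of_eq ?_)
      field_simp
      ring
    linarith
  · have key : m * u / D ≤ m / 2 * (u / t ^ 3) := by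
      have h3 : m * u / D ≤ m * u / (2 * t ^ 3) :=
        div_le_div_of_nonneg_left (by positivity) (by positivity) hDlow
      refine h3.trans (le_of_eq ?_)
      field_simp
    have h0 : 0 ≤ 5 * m / 4 * (u / t ^ 5) := by positivity
    linarith

lemma key_bound (n : ℕ) (hn : 3 ≤ n) (m : ℝ) (hm : 0 < m) (t : ℝ) (ht : max 1 m ≤ t) :
    |(1 / Real.sqrt (1 + t ^ 2 - m * t ^ ((2 : ℝ) - (n : ℝ))) - 1 / Real.sqrt (1 + t ^ 2))
      - m / 2 * t ^ (-(n : ℝ) - 1)| ≤ 5 * m / 4 * t ^ (-(n : ℝ) - 3) := by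
  have ht1 : (1:ℝ) ≤ t := le_trans (le_max_left _ _) ht
  have htm : m ≤ t := le_trans (le_max_right _ _) ht
  have ht0 : (0:ℝ) < t := lt_of_lt_of_le one_pos ht1
  have hu0 : 0 < t ^ ((2 : ℝ) - (n : ℝ)) := Real.rpow_pos_of_pos ht0 _
  have hule : t ^ ((2 : ℝ) - (n : ℝ)) ≤ t⁻¹ := by
    rw [← Real.rpow_neg_one t]
    apply Real.rpow_le_rpow_of_exponent_le ht1
    have : (3:ℝ) ≤ (n:ℝ) := by exact_mod_cast hn
    linarith
  have hmu : m * t ^ ((2 : ℝ) - (n : ℝ)) ≤ 1 := by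
    calc m * t ^ ((2 : ℝ) - (n : ℝ)) ≤ t * t⁻¹ := mul_le_mul htm hule hu0.le ht0.le
      _ = 1 := mul_inv_cancel₀ ht0.ne'
  have e1 : t ^ (-(n : ℝ) - 1) = t ^ ((2 : ℝ) - (n : ℝ)) / t ^ 3 := by
    rw [show -(n:ℝ) - 1 = ((2:ℝ) - n) + (-3) by ring, Real.rpow_add ht0,
      Real.rpow_neg ht0.le, div_eq_mul_inv]
    norm_num [Real.rpow_natCast]
  have e2 : t ^ (-(n : ℝ) - 3) = t ^ ((2 : ℝ) - (n : ℝ)) / t ^ 5 := by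
    rw [show -(n:ℝ) - 3 = ((2:ℝ) - n) + (-5) by ring, Real.rpow_add ht0,
      Real.rpow_neg ht0.le, div_eq_mul_inv]
    norm_num [Real.rpow_natCast]
  rw [e1, e2]
  exact aux_alg m t _ hm ht1 hu0 hmu


lemma arsinh_int (s : ℝ) : (∫ t in (0:ℝ)..s, 1 / Real.sqrt (1 + t ^ 2)) = Real.arsinh s := by
  have hc : Continuous fun t : ℝ => (Real.sqrt (1 + t ^ 2))⁻¹ := by
    apply Continuous.inv₀
    · exact (continuous_const.add (continuous_pow 2)).sqrt
    · intro x; positivity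
  have := intervalIntegral.integral_eq_sub_of_hasDerivAt
    (f := Real.arsinh) (f' := fun t => (Real.sqrt (1 + t ^ 2))⁻¹) (a := 0) (b := s)
    (fun t _ => Real.hasDerivAt_arsinh t) (hc.intervalIntegrable 0 s)
  simpa [one_div, Real.arsinh_zero] using this


lemma a_pos (n : ℕ) (m : ℝ) (hn : 3 ≤ n) (t : ℝ) (ht : max 1 m ≤ t) :
    t ^ 2 ≤ 1 + t ^ 2 - m * t ^ ((2 : ℝ) - (n : ℝ)) := by
  have ht1 : (1:ℝ) ≤ t := le_trans (le_max_left _ _) ht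
  have htm : m ≤ t := le_trans (le_max_right _ _) ht
  have ht0 : (0:ℝ) < t := lt_of_lt_of_le one_pos ht1
  have hu0 : 0 < t ^ ((2 : ℝ) - (n : ℝ)) := Real.rpow_pos_of_pos ht0 _
  have hule : t ^ ((2 : ℝ) - (n : ℝ)) ≤ t⁻¹ := by
    rw [← Real.rpow_neg_one t]
    apply Real.rpow_le_rpow_of_exponent_le ht1
    have : (3:ℝ) ≤ (n:ℝ) := by exact_mod_cast hn
    linarith
  have hmu : m * t ^ ((2 : ℝ) - (n : ℝ)) ≤ 1 := by
    calc m * t ^ ((2 : ℝ) - (n : ℝ)) ≤ t * t⁻¹ := mul_le_mul htm hule hu0.le ht0.le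
      _ = 1 := mul_inv_cancel₀ ht0.ne'
  linarith

theorem main (n : ℕ) (hn : 3 ≤ n) (m : ℝ) (hm : 0 < m)
    (key_bound : ∀ t : ℝ, max 1 m ≤ t →
      |(1 / Real.sqrt (1 + t ^ 2 - m * t ^ ((2 : ℝ) - (n : ℝ))) - 1 / Real.sqrt (1 + t ^ 2))
        - m / 2 * t ^ (-(n : ℝ) - 1)| ≤ 5 * m / 4 * t ^ (-(n : ℝ) - 3))
    (arsinh_int : ∀ s : ℝ, (∫ t in (0:ℝ)..s, 1 / Real.sqrt (1 + t ^ 2)) = Real.arsinh s) :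
    (fun s : ℝ => ((∫ t in (0 : ℝ)..s, 1 / Real.sqrt (1 + t ^ 2)) -
      ∫ t in Set.Ioi s,
        (1 / Real.sqrt (1 + t ^ 2 - m * t ^ ((2 : ℝ) - (n : ℝ))) - 1 / Real.sqrt (1 + t ^ 2)))
        - (Real.arsinh s - m / (2 * n) * s ^ (-(n : ℝ))))
      =O[atTop] fun s : ℝ => s ^ (-(n : ℝ) - 2) := by
  have hn0 : (0:ℝ) < (n:ℝ) := by
    have : (3:ℝ) ≤ (n:ℝ) := by exact_mod_cast hn
    linarith
  rw [Asymptotics.isBigO_iff]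
  refine ⟨5 * m / 4, ?_⟩
  filter_upwards [eventually_ge_atTop (max 1 m)] with s hs
  have hs1 : (1:ℝ) ≤ s := le_trans (le_max_left _ _) hs
  have hs0 : (0:ℝ) < s := lt_of_lt_of_le one_pos hs1
  set h : ℝ → ℝ := fun t =>
    1 / Real.sqrt (1 + t ^ 2 - m * t ^ ((2 : ℝ) - (n : ℝ))) - 1 / Real.sqrt (1 + t ^ 2) with hh
  set g1 : ℝ → ℝ := fun t => m / 2 * t ^ (-(n : ℝ) - 1) with hg1
  -- continuity
  have hmem : ∀ t ∈ Set.Ioi s, max 1 m ≤ t := fun t htI => hs.trans (le_of_lt htI)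
  have hcont : ContinuousOn h (Set.Ioi s) := by
    apply ContinuousOn.sub
    · apply ContinuousOn.div continuousOn_const
      · apply ContinuousOn.sqrt
        apply ContinuousOn.sub
        · exact (continuous_const.add (continuous_pow 2)).continuousOn
        · exact continuousOn_const.mul (ContinuousOn.rpow_const continuousOn_id
            (fun x hx => Or.inl (ne_of_gt (lt_trans hs0 hx))))
      · intro x hx
        have h1 := a_pos n m hn x (hmem x hx)
        have h2 : (0:ℝ) < 1 + x ^ 2 - m * x ^ ((2 : ℝ) - (n : ℝ)) :=
          lt_of_lt_of_le (pow_pos (hs0.trans hx) 2) h1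
        exact ne_of_gt (Real.sqrt_pos.2 h2)
    · apply ContinuousOn.div continuousOn_const
      · exact ((continuous_const.add (continuous_pow 2)).sqrt).continuousOn
      · intro x _; exact ne_of_gt (Real.sqrt_pos.2 (by positivity))
  have hg1cont : ContinuousOn g1 (Set.Ioi s) :=
    continuousOn_const.mul (ContinuousOn.rpow_const continuousOn_id
      (fun x hx => Or.inl (ne_of_gt (lt_trans hs0 hx))))
  -- integrability
  have int1 : IntegrableOn g1 (Set.Ioi s) := by
    apply Integrable.const_mul
    exact integrableOn_Ioi_rpow_of_lt (by linarith) hs0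
  have int3 : IntegrableOn (fun t => 5 * m / 4 * t ^ (-(n : ℝ) - 3)) (Set.Ioi s) := by
    apply Integrable.const_mul
    exact integrableOn_Ioi_rpow_of_lt (by linarith) hs0
  have hbound : ∀ᵐ t ∂(volume.restrict (Set.Ioi s)),
      ‖h t - g1 t‖ ≤ 5 * m / 4 * t ^ (-(n : ℝ) - 3) := by
    rw [ae_restrict_iff' measurableSet_Ioi]
    exact ae_of_all _ fun t htI => key_bound t (hmem t htI)
  have hmeas : AEStronglyMeasurable (fun t => h t - g1 t) (volume.restrict (Set.Ioi s)) :=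
    (hcont.sub hg1cont).aestronglyMeasurable measurableSet_Ioi
  have intphi : IntegrableOn (fun t => h t - g1 t) (Set.Ioi s) := by
    apply Integrable.mono int3 hmeas
    refine hbound.mono fun t ht => ht.trans (le_abs_self _)
  have inth : IntegrableOn h (Set.Ioi s) := by
    have h2 := intphi.add int1
    have he : h = (fun t => h t - g1 t) + g1 := by funext t; simp
    rw [he]
    exact h2
  -- computations
  have E1 : ∫ t in Set.Ioi s, g1 t = m / (2 * n) * s ^ (-(n : ℝ)) := by
    rw [hg1]
    simp only []
    rw [MeasureTheory.integral_const_mul, integral_Ioi_rpow_of_lt (by linarith) hs0,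
      show (-(n:ℝ) - 1) + 1 = -(n:ℝ) by ring]
    field_simp
  have E3 : ∫ t in Set.Ioi s, 5 * m / 4 * t ^ (-(n : ℝ) - 3)
      = 5 * m / 4 * (s ^ (-(n : ℝ) - 2) / ((n : ℝ) + 2)) := by
    rw [MeasureTheory.integral_const_mul, integral_Ioi_rpow_of_lt (by linarith) hs0,
      show (-(n:ℝ) - 3) + 1 = -(n:ℝ) - 2 by ring]
    have hne : -(n:ℝ) - 2 ≠ 0 := by intro hc; nlinarith
    field_simp
    ring
  have split : ∫ t in Set.Ioi s, h t
      = (∫ t in Set.Ioi s, (h t - g1 t)) + ∫ t in Set.Ioi s, g1 t := by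
    rw [← MeasureTheory.integral_add intphi int1]
    simp
  have main_eq : ((∫ t in (0 : ℝ)..s, 1 / Real.sqrt (1 + t ^ 2)) -
      ∫ t in Set.Ioi s, (1 / Real.sqrt (1 + t ^ 2 - m * t ^ ((2 : ℝ) - (n : ℝ)))
        - 1 / Real.sqrt (1 + t ^ 2)))
        - (Real.arsinh s - m / (2 * n) * s ^ (-(n : ℝ)))
      = -(∫ t in Set.Ioi s, (h t - g1 t)) := by
    rw [arsinh_int s]
    have : (∫ t in Set.Ioi s, (1 / Real.sqrt (1 + t ^ 2 - m * t ^ ((2 : ℝ) - (n : ℝ)))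
        - 1 / Real.sqrt (1 + t ^ 2))) = ∫ t in Set.Ioi s, h t := rfl
    rw [this, split, E1]
    ring
  rw [main_eq, norm_neg]
  have bnd : ‖∫ t in Set.Ioi s, (h t - g1 t)‖
      ≤ ∫ t in Set.Ioi s, 5 * m / 4 * t ^ (-(n : ℝ) - 3) :=
    MeasureTheory.norm_integral_le_of_norm_le int3 hbound
  rw [E3] at bnd
  have hsp : (0:ℝ) < s ^ (-(n : ℝ) - 2) := Real.rpow_pos_of_pos hs0 _
  have hfinal : 5 * m / 4 * (s ^ (-(n : ℝ) - 2) / ((n : ℝ) + 2)) ≤ 5 * m / 4 * s ^ (-(n : ℝ) - 2) := by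
    apply mul_le_mul_of_nonneg_left _ (by positivity)
    rw [div_le_iff₀ (by linarith)]
    nlinarith
  calc ‖∫ t in Set.Ioi s, (h t - g1 t)‖ ≤ _ := bnd
    _ ≤ 5 * m / 4 * s ^ (-(n : ℝ) - 2) := hfinal
    _ = 5 * m / 4 * ‖s ^ (-(n : ℝ) - 2)‖ := by rw [Real.norm_eq_abs, abs_of_pos hsp]

/-- The change-of-variables function `r(s)` for the AdS-Schwarzschild metric. -/
noncomputable def rCoord (m : ℝ) (n : ℕ) (s : ℝ) : ℝ :=
  (∫ t in (0 : ℝ)..s, 1 / Real.sqrt (1 + t ^ 2)) -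
    ∫ t in Set.Ioi s,
      (1 / Real.sqrt (1 + t ^ 2 - m * t ^ ((2 : ℝ) - (n : ℝ))) - 1 / Real.sqrt (1 + t ^ 2))

/-- As `s → ∞`, `r(s) = arsinh(s) − (m/(2n)) s^{−n} + O(s^{−n−2})`. -/
theorem rCoord_asymptotics (n : ℕ) (hn : 3 ≤ n) (m : ℝ) (hm : 0 < m) :
    (fun s : ℝ => rCoord m n s - (Real.arsinh s - m / (2 * n) * s ^ (-(n : ℝ))))
      =O[atTop] fun s : ℝ => s ^ (-(n : ℝ) - 2) := by
  have H := main n hn m hm (fun t ht => key_bound n hn m hm t ht) arsinh_int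
  unfold rCoord
  exact H
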